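/- If 𝒜 is any z-filter on Lmc(S), then E⁻(𝒜) = {f ∈ Lmc(S) : E_ε(f) ∈ 𝒜 for all ε > 0} is an e-ideal of Lmc(S). -/

import Mathlib

open scoped BoundedContinuousFunction
open WeakDual

/-- A semitopological semigroup: multiplication is separately continuous. -/
class SemitopologicalSemigroup (S : Type*) [TopologicalSpace S] [Mul S] : Prop where
  continuous_mul_left : ∀ s : S, Continuous fun x : S => s * x
  continuous_mul_right : ∀ s : S, Continuous fun x : S => x * s

/-- Left translate `L_s f (x) = f (s x)` as a bounded continuous function. -/
noncomputable def lTrans {S : Type*} [TopologicalSpace S] [Mul S] [SemitopologicalSemigroup S]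
    (s : S) (f : S →ᵇ ℂ) : S →ᵇ ℂ :=
  f.compContinuous ⟨fun x => s * x, SemitopologicalSemigroup.continuous_mul_left s⟩

/-- The left multiplicatively continuous functions: `f ∈ Lmc S` iff `T_μ f` is (bounded)
continuous for every character `μ` of `CB(S) = S →ᵇ ℂ` (i.e. every `μ ∈ βS`). -/
def Lmc (S : Type*) [TopologicalSpace S] [Mul S] [SemitopologicalSemigroup S] :
    Set (S →ᵇ ℂ) :=
  {f | ∀ μ : characterSpace ℂ (S →ᵇ ℂ), Continuous fun s : S => (μ (lTrans s f) : ℂ)}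

/-- `E_ε(f) = {x ∈ S : |f x| ≤ ε}`. -/
def Eset {S : Type*} [TopologicalSpace S] (ε : ℝ) (f : S →ᵇ ℂ) : Set S :=
  {x : S | ‖f x‖ ≤ ε}

/-- A zero set of `Lmc S`: `Z(f) = f⁻¹({0})` for some `f ∈ Lmc S`. -/
def IsZeroSet {S : Type*} [TopologicalSpace S] [Mul S] [SemitopologicalSemigroup S]
    (A : Set S) : Prop :=
  ∃ f ∈ Lmc S, A = {x : S | f x = 0}

/-- `E(I) = {E_ε(f) : f ∈ I, ε > 0}`. -/
def Efam {S : Type*} [TopologicalSpace S] [Mul S] [SemitopologicalSemigroup S]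
    (I : Set (S →ᵇ ℂ)) : Set (Set S) :=
  {A | ∃ f ∈ I, ∃ ε : ℝ, 0 < ε ∧ A = Eset ε f}

/-- `E⁻(𝒜) = {f ∈ Lmc S : E_ε(f) ∈ 𝒜 for all ε > 0}`. -/
def Einv {S : Type*} [TopologicalSpace S] [Mul S] [SemitopologicalSemigroup S]
    (𝒜 : Set (Set S)) : Set (S →ᵇ ℂ) :=
  {f | f ∈ Lmc S ∧ ∀ ε : ℝ, 0 < ε → Eset ε f ∈ 𝒜}

/-- A `z`-filter on `Lmc S`. -/
structure IsZFilter {S : Type*} [TopologicalSpace S] [Mul S] [SemitopologicalSemigroup S]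
    (𝒜 : Set (Set S)) : Prop where
  zero_sets : ∀ A ∈ 𝒜, IsZeroSet A
  not_empty_mem : ∅ ∉ 𝒜
  univ_mem : Set.univ ∈ 𝒜
  inter_mem : ∀ A ∈ 𝒜, ∀ B ∈ 𝒜, A ∩ B ∈ 𝒜
  superset_mem : ∀ A ∈ 𝒜, ∀ B : Set S, IsZeroSet B → A ⊆ B → B ∈ 𝒜

/-- An ideal of the algebra `Lmc S`. -/
structure IsIdealLmc {S : Type*} [TopologicalSpace S] [Mul S] [SemitopologicalSemigroup S]
    (I : Set (S →ᵇ ℂ)) : Prop where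
  subset_lmc : I ⊆ Lmc S
  zero_mem : (0 : S →ᵇ ℂ) ∈ I
  add_mem : ∀ f ∈ I, ∀ g ∈ I, f + g ∈ I
  mul_mem : ∀ f ∈ Lmc S, ∀ g ∈ I, f * g ∈ I

/-- A maximal (proper) ideal of `Lmc S`. -/
def IsMaximalIdealLmc {S : Type*} [TopologicalSpace S] [Mul S] [SemitopologicalSemigroup S]
    (M : Set (S →ᵇ ℂ)) : Prop :=
  IsIdealLmc M ∧ M ≠ Lmc S ∧ ∀ J, IsIdealLmc J → J ≠ Lmc S → M ⊆ J → J = M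

/-- An `e`-filter: a `z`-filter with `E(E⁻(𝒜)) = 𝒜`. -/
def IsEFilter {S : Type*} [TopologicalSpace S] [Mul S] [SemitopologicalSemigroup S]
    (𝒜 : Set (Set S)) : Prop :=
  IsZFilter 𝒜 ∧ Efam (Einv 𝒜) = 𝒜

/-- An `e`-ideal: an ideal with `E⁻(E(I)) = I`. -/
def IsEIdeal {S : Type*} [TopologicalSpace S] [Mul S] [SemitopologicalSemigroup S]
    (I : Set (S →ᵇ ℂ)) : Prop :=
  IsIdealLmc I ∧ Einv (Efam I) = I

/-- An `e`-ultrafilter: a maximal `e`-filter. -/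
def IsEUltrafilter {S : Type*} [TopologicalSpace S] [Mul S] [SemitopologicalSemigroup S]
    (p : Set (Set S)) : Prop :=
  IsEFilter p ∧ ∀ q, IsEFilter q → p ⊆ q → q = p

/-- The sum `p + q` of two families of zero sets: `A ∈ p + q` iff `A = E_ε(f)` for some `ε > 0`,
`f ∈ Lmc S`, with `E_δ(q, f) = {x : λ_x⁻¹(E_δ(f)) ∈ q} ∈ p` for all `δ > 0`. -/
def eAdd {S : Type*} [TopologicalSpace S] [Mul S] [SemitopologicalSemigroup S]
    (p q : Set (Set S)) : Set (Set S) :=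
  {A | ∃ ε : ℝ, 0 < ε ∧ ∃ f ∈ Lmc S, A = Eset ε f ∧
    ∀ δ : ℝ, 0 < δ → {x : S | (fun t => x * t) ⁻¹' Eset δ f ∈ q} ∈ p}

/-- The principal `e`-ultrafilter `e(a) = {E_ε(f) : f ∈ Lmc S, f a = 0, ε > 0}`. -/
def ePrinc {S : Type*} [TopologicalSpace S] [Mul S] [SemitopologicalSemigroup S]
    (a : S) : Set (Set S) :=
  {A | ∃ f ∈ Lmc S, f a = 0 ∧ ∃ ε : ℝ, 0 < ε ∧ A = Eset ε f}

section Aux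

open scoped BoundedContinuousFunction
open WeakDual

variable {S : Type*} [TopologicalSpace S] [Mul S] [SemitopologicalSemigroup S]

noncomputable instance : CommCStarAlgebra (S →ᵇ ℂ) := { }

/-- Evaluation at a point as a star algebra homomorphism. -/
noncomputable def evalSAH (x : S) : (S →ᵇ ℂ) →⋆ₐ[ℂ] ℂ where
  toFun f := f x
  map_one' := rfl
  map_mul' _ _ := rfl
  map_zero' := rfl
  map_add' _ _ := rfl
  commutes' _ := rfl
  map_star' _ := rfl

/-- Left translation as a star algebra homomorphism. -/
noncomputable def lTransSAH (s : S) : (S →ᵇ ℂ) →⋆ₐ[ℂ] (S →ᵇ ℂ) where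
  toFun f := lTrans s f
  map_one' := by ext x; rfl
  map_mul' _ _ := by ext x; rfl
  map_zero' := by ext x; rfl
  map_add' _ _ := by ext x; rfl
  commutes' _ := by ext x; rfl
  map_star' _ := by ext x; rfl

lemma continuous_lTransSAH (s : S) : Continuous (lTransSAH s) :=
  BoundedContinuousFunction.continuous_compContinuous _

lemma continuous_evalSAH (x : S) : Continuous (evalSAH x) :=
  continuous_eval_const x

lemma cfc_complex (Φ : ℂ → ℂ) (hΦ : Continuous Φ) (z : ℂ) : cfc Φ z = Φ z := by
  have hz : spectrum ℂ z = {z} := by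
    simpa using spectrum.scalar_eq (𝕜 := ℂ) (A := ℂ) z
  have h1 : spectrum ℂ (cfc Φ z) = Φ '' spectrum ℂ z :=
    cfc_map_spectrum Φ z (hf := hΦ.continuousOn)
  have h2 : spectrum ℂ (cfc Φ z) = {cfc Φ z} := by
    simpa using spectrum.scalar_eq (𝕜 := ℂ) (A := ℂ) (cfc Φ z)
  rw [h2, hz, Set.image_singleton] at h1
  exact Set.singleton_eq_singleton_iff.mp h1

lemma zero_mem_Lmc : (0 : S →ᵇ ℂ) ∈ Lmc S := by
  intro μ
  have h : ∀ s : S, lTrans s (0 : S →ᵇ ℂ) = 0 := fun s => by ext x; rfl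
  simp only [h, map_zero]
  exact continuous_const

lemma add_mem_Lmc {f g : S →ᵇ ℂ} (hf : f ∈ Lmc S) (hg : g ∈ Lmc S) : f + g ∈ Lmc S := by
  intro μ
  have h : ∀ s : S, lTrans s (f + g) = lTrans s f + lTrans s g := fun s => by ext x; rfl
  simp only [h, map_add]
  exact (hf μ).add (hg μ)

lemma mul_mem_Lmc {f g : S →ᵇ ℂ} (hf : f ∈ Lmc S) (hg : g ∈ Lmc S) : f * g ∈ Lmc S := by
  intro μ
  have h : ∀ s : S, lTrans s (f * g) = lTrans s f * lTrans s g := fun s => by ext x; rfl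
  simp only [h, map_mul]
  exact (hf μ).mul (hg μ)

/-- `E_ε(f)` is a zero set (of the Lmc function `cfc (fun z => max (‖z‖ - ε) 0) f`). -/
lemma isZeroSet_Eset {f : S →ᵇ ℂ} (hf : f ∈ Lmc S) {ε : ℝ} (hε : 0 < ε) :
    IsZeroSet (Eset ε f) := by
  set Φ : ℂ → ℂ := fun z => (((‖z‖ - ε) ⊔ 0 : ℝ) : ℂ) with hΦdef
  have hΦ : Continuous Φ :=
    Complex.continuous_ofReal.comp (((continuous_norm.sub continuous_const).max continuous_const))
  set g : S →ᵇ ℂ := cfc Φ f with hg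
  have key : ∀ (ψ : (S →ᵇ ℂ) →⋆ₐ[ℂ] ℂ), Continuous ψ → ∀ h : S →ᵇ ℂ,
      ψ (cfc Φ h) = Φ (ψ h) := by
    intro ψ hψ h
    rw [StarAlgHom.map_cfc ψ Φ h hΦ.continuousOn hψ, cfc_complex Φ hΦ]
  have hgx : ∀ x : S, g x = Φ (f x) := fun x => key (evalSAH x) (continuous_evalSAH x) f
  refine ⟨g, ?_, ?_⟩
  · -- g ∈ Lmc S
    intro μ
    have hμcont : Continuous μ := map_continuous μ
    have hcomm : ∀ s : S, (μ (lTrans s g) : ℂ) = Φ (μ (lTrans s f)) := by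
      intro s
      have h1 : lTrans s g = cfc Φ (lTrans s f) := by
        have := StarAlgHom.map_cfc (lTransSAH s) Φ f hΦ.continuousOn (continuous_lTransSAH s)
        simpa [lTransSAH] using this
      rw [h1]
      calc (μ (cfc Φ (lTrans s f)) : ℂ)
          = cfc Φ (μ (lTrans s f)) :=
            StarAlgHomClass.map_cfc μ Φ (lTrans s f) hΦ.continuousOn hμcont
        _ = Φ (μ (lTrans s f)) := cfc_complex Φ hΦ _
    have : (fun s : S => (μ (lTrans s g) : ℂ)) = fun s => Φ (μ (lTrans s f)) :=
      funext hcomm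
    rw [this]
    exact hΦ.comp (hf μ)
  · -- Eset ε f = zero set of g
    ext x
    simp only [Eset, Set.mem_setOf_eq, hgx x, hΦdef, Complex.ofReal_eq_zero, sup_eq_right]
    constructor <;> intro h <;> linarith

end Aux

theorem stmt10 {S : Type*} [TopologicalSpace S] [T2Space S] [Semigroup S]
    [SemitopologicalSemigroup S] (𝒜 : Set (Set S)) (h𝒜 : IsZFilter 𝒜) :
    IsEIdeal (Einv 𝒜) := by
  constructor
  · constructor
    · intro f hf; exact hf.1
    · refine ⟨zero_mem_Lmc, fun ε hε => ?_⟩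
      have : Eset ε (0 : S →ᵇ ℂ) = Set.univ := by
        ext x; simp [Eset, hε.le]
      rw [this]; exact h𝒜.univ_mem
    · rintro f ⟨hfl, hfE⟩ g ⟨hgl, hgE⟩
      refine ⟨add_mem_Lmc hfl hgl, fun ε hε => ?_⟩
      have hmem : Eset (ε/2) f ∩ Eset (ε/2) g ∈ 𝒜 :=
        h𝒜.inter_mem _ (hfE _ (by linarith)) _ (hgE _ (by linarith))
      refine h𝒜.superset_mem _ hmem _ (isZeroSet_Eset (add_mem_Lmc hfl hgl) hε) ?_
      rintro x ⟨hxf, hxg⟩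
      simp only [Eset, Set.mem_setOf_eq] at *
      calc ‖(f + g) x‖ = ‖f x + g x‖ := rfl
        _ ≤ ‖f x‖ + ‖g x‖ := norm_add_le _ _
        _ ≤ ε := by linarith
    · rintro f hfl g ⟨hgl, hgE⟩
      refine ⟨mul_mem_Lmc hfl hgl, fun ε hε => ?_⟩
      have hM0 : (0 : ℝ) < ‖f‖ + 1 := by positivity
      have hmem : Eset (ε / (‖f‖ + 1)) g ∈ 𝒜 := hgE _ (by positivity)
      refine h𝒜.superset_mem _ hmem _ (isZeroSet_Eset (mul_mem_Lmc hfl hgl) hε) ?_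
      intro x hx
      simp only [Eset, Set.mem_setOf_eq] at *
      have hfb : ‖f x‖ ≤ ‖f‖ := f.norm_coe_le_norm x
      calc ‖(f * g) x‖ = ‖f x‖ * ‖g x‖ := by
            simp [BoundedContinuousFunction.coe_mul]
        _ ≤ (‖f‖ + 1) * (ε / (‖f‖ + 1)) := by
            apply mul_le_mul (by linarith) hx (norm_nonneg _) hM0.le
        _ = ε := by field_simp
  · ext f
    constructor
    · rintro ⟨hfl, hfE⟩
      refine ⟨hfl, fun ε hε => ?_⟩
      obtain ⟨g, hg, δ, hδ, heq⟩ := hfE ε hε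
      rw [heq]
      exact hg.2 δ hδ
    · rintro ⟨hfl, hfE⟩
      exact ⟨hfl, fun ε hε => ⟨f, ⟨hfl, hfE⟩, ε, hε, rfl⟩⟩
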